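/- For every nonnegative integer α, nonnegative integer j, and real μ, ∫_0^∞ {}_0F_1(α+1; μλ) · L_j^{(α)}(λ) · λ^α e^{-λ} dλ = (α!/j!) · (-μ)^j · e^{μ}. -/

import Mathlib

open MeasureTheory Set Finset Function
open scoped fwdDiff

/-- The generalized Laguerre polynomial of degree `M` with parameter `ρ`. -/
noncomputable def laguerre (ρ : ℝ) (M : ℕ) (z : ℝ) : ℝ :=
  ((ascPochhammer ℝ M).eval (ρ + 1) / (Nat.factorial M : ℝ)) *
    ∑ j ∈ Finset.range (M + 1),
      ((ascPochhammer ℝ j).eval (-(M : ℝ)) / (ascPochhammer ℝ j).eval (ρ + 1)) *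
        z ^ j / (Nat.factorial j : ℝ)

/-- The confluent hypergeometric limit function `₀F₁(c; z)`. -/
noncomputable def hyp0F1 (c z : ℝ) : ℝ :=
  ∑' k : ℕ, z ^ k / ((ascPochhammer ℝ k).eval c * (Nat.factorial k : ℝ))

-- basic integral lemmas
lemma integrable_pow_exp (n : ℕ) :
    IntegrableOn (fun x : ℝ => x ^ n * Real.exp (-x)) (Set.Ioi 0) := by
  have h := Real.GammaIntegral_convergent (s := n + 1) (by positivity)
  refine h.congr_fun (fun x hx => ?_) measurableSet_Ioi
  rw [add_sub_cancel_right]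
  beta_reduce
  rw [Real.rpow_natCast, mul_comm]

lemma integral_pow_exp (n : ℕ) :
    ∫ x in Set.Ioi (0:ℝ), x ^ n * Real.exp (-x) = n.factorial := by
  have h := Real.Gamma_eq_integral (s := n + 1) (by positivity)
  rw [Real.Gamma_nat_eq_factorial] at h
  rw [h]
  refine setIntegral_congr_fun measurableSet_Ioi (fun x hx => ?_)
  rw [add_sub_cancel_right, Real.rpow_natCast, mul_comm]

lemma alt_sum_choose (j m k : ℕ) :
    ∑ i ∈ Finset.range (j+1), (-1:ℤ)^i * (j.choose i) * ((m+i).choose k)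
      = (-1:ℤ)^j * (if j ≤ k then ((m.choose (k-j) : ℤ)) else 0) := by
  have H := fwdDiff_iter_eq_sum_shift (1 : ℕ) (fun x => ((x.choose k : ℤ))) j m
  simp only [smul_eq_mul, mul_one] at H
  have hS : ∑ i ∈ Finset.range (j+1), (-1:ℤ)^i * (j.choose i) * ((m+i).choose k)
      = (-1:ℤ)^j * (fwdDiff 1)^[j] (fun x => ((x.choose k : ℤ))) m := by
    rw [H, Finset.mul_sum]
    refine Finset.sum_congr rfl (fun i hi => ?_)
    have hij : i ≤ j := Nat.lt_succ_iff.mp (Finset.mem_range.mp hi)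
    have h1 : (-1:ℤ)^(j-i) * (-1:ℤ)^i = (-1:ℤ)^j := by
      rw [← pow_add, Nat.sub_add_cancel hij]
    have h2 : ((-1:ℤ)^(j-i))^2 = 1 := by
      rw [← pow_mul, mul_comm, pow_mul, neg_one_sq, one_pow]
    have h3 : (-1:ℤ)^i = (-1:ℤ)^j * (-1:ℤ)^(j-i) := by
      calc (-1:ℤ)^i = ((-1:ℤ)^(j-i))^2 * (-1:ℤ)^i := by rw [h2]; ring
        _ = (-1:ℤ)^j * (-1:ℤ)^(j-i) := by rw [← h1]; ring
    rw [h3]; ring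
  rw [hS]
  congr 1
  by_cases hjk : j ≤ k
  · have h4 := fwdDiff_iter_choose (k - j) j
    rw [Nat.add_sub_cancel' hjk] at h4
    rw [h4, if_pos hjk]
  · rw [if_neg hjk]
    push_neg at hjk
    have e1 : j = (j - k) + k := by omega
    rw [e1, Function.iterate_add_apply]
    have h5 := fwdDiff_iter_choose 0 k
    simp only [Nat.add_zero] at h5
    rw [h5]
    have h6 : (fun x : ℕ => ((x.choose 0 : ℤ))) = fun _ => (1:ℤ) := by simp
    rw [h6]
    obtain ⟨r, hr⟩ : ∃ r, j - k = r + 1 := ⟨j - k - 1, by omega⟩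
    rw [hr, Function.iterate_succ_apply, fwdDiff_const]
    rw [Function.iterate_fixed (fwdDiff_const 1 (0:ℤ))]

lemma fact_id (a j k : ℕ) (hjk : j ≤ k) :
    (a+j).factorial * (k.factorial * (a+k).choose (k-j))
      = j.factorial * (k.choose j * (a+k).factorial) := by
  have h1 : (a+k).choose (k-j) * (k-j).factorial * ((a+k)-(k-j)).factorial = (a+k).factorial :=
    Nat.choose_mul_factorial_mul_factorial (by omega)
  have h2 : (a+k) - (k-j) = a + j := by omega
  rw [h2] at h1
  have h3 : k.choose j * j.factorial * (k-j).factorial = k.factorial :=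
    Nat.choose_mul_factorial_mul_factorial hjk
  apply Nat.eq_of_mul_eq_mul_right (Nat.factorial_pos (k-j))
  calc (a+j).factorial * (k.factorial * (a+k).choose (k-j)) * (k-j).factorial
      = k.factorial * ((a+k).choose (k-j) * (k-j).factorial * (a+j).factorial) := by ring
    _ = k.factorial * (a+k).factorial := by rw [h1]
    _ = (k.choose j * j.factorial * (k-j).factorial) * (a+k).factorial := by rw [h3]
    _ = j.factorial * (k.choose j * (a+k).factorial) * (k-j).factorial := by ring

lemma asc_eval_nat (a i : ℕ) :
    (ascPochhammer ℝ i).eval ((a:ℝ)+1) = (((a+1).ascFactorial i : ℕ) : ℝ) := by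
  have h : ((a:ℝ)+1) = (((a+1 : ℕ) : ℝ)) := by push_cast; ring
  rw [h, ← ascPochhammer_eval_cast, ascPochhammer_nat_eq_ascFactorial]

lemma asc_eval_fact (a i : ℕ) :
    (a.factorial : ℝ) * (ascPochhammer ℝ i).eval ((a:ℝ)+1) = ((a+i).factorial : ℝ) := by
  rw [asc_eval_nat]
  rw_mod_cast [Nat.factorial_mul_ascFactorial]

lemma asc_eval_pos (a i : ℕ) : 0 < (ascPochhammer ℝ i).eval ((a:ℝ)+1) :=
  ascPochhammer_pos i _ (by positivity)

lemma asc_eval_neg (j i : ℕ) :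
    (ascPochhammer ℝ i).eval (-(j:ℝ)) = (-1:ℝ)^i * ((j.descFactorial i : ℕ) : ℝ) := by
  rw [ascPochhammer_eval_neg_eq_descPochhammer, descPochhammer_eval_eq_descFactorial]

noncomputable def lagC (a j i : ℕ) : ℝ :=
  ((ascPochhammer ℝ j).eval ((a:ℝ)+1) / (j.factorial : ℝ)) *
    ((ascPochhammer ℝ i).eval (-(j:ℝ)) / (ascPochhammer ℝ i).eval ((a:ℝ)+1)) / (i.factorial : ℝ)

lemma laguerre_eq (a j : ℕ) (z : ℝ) :
    laguerre (a:ℝ) j z = ∑ i ∈ Finset.range (j+1), lagC a j i * z ^ i := by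
  rw [laguerre, Finset.mul_sum]
  exact Finset.sum_congr rfl fun i _ => by rw [lagC]; ring

lemma lagC_eq (a j i : ℕ) :
    lagC a j i = (-1:ℝ)^i * (j.choose i) * ((a+j).factorial : ℝ)
      / ((j.factorial : ℝ) * ((a+i).factorial : ℝ)) := by
  rw [lagC, asc_eval_neg]
  have h1 := asc_eval_fact a j
  have h2 := asc_eval_fact a i
  have h3 : ((j.descFactorial i : ℕ) : ℝ) = (i.factorial : ℝ) * (j.choose i : ℝ) := by
    rw_mod_cast [Nat.descFactorial_eq_factorial_mul_choose]
  have hp : (0:ℝ) < (ascPochhammer ℝ i).eval ((a:ℝ)+1) := asc_eval_pos a i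
  have ha0 : (a.factorial : ℝ) ≠ 0 := Nat.cast_ne_zero.mpr (Nat.factorial_ne_zero a)
  have hi0 : (i.factorial : ℝ) ≠ 0 := Nat.cast_ne_zero.mpr (Nat.factorial_ne_zero i)
  have hj0 : (j.factorial : ℝ) ≠ 0 := Nat.cast_ne_zero.mpr (Nat.factorial_ne_zero j)
  have hai : ((a+i).factorial : ℝ) ≠ 0 := Nat.cast_ne_zero.mpr (Nat.factorial_ne_zero _)
  have e1 : (ascPochhammer ℝ j).eval ((a:ℝ)+1) = ((a+j).factorial : ℝ) / (a.factorial : ℝ) := by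
    rw [eq_div_iff ha0]; linarith [h1]
  have e2 : (ascPochhammer ℝ i).eval ((a:ℝ)+1) = ((a+i).factorial : ℝ) / (a.factorial : ℝ) := by
    rw [eq_div_iff ha0]; linarith [h2]
  rw [e1, e2, h3]
  field_simp

lemma sum_lagC (a j k : ℕ) :
    ∑ i ∈ Finset.range (j+1), lagC a j i * ((k+i+a).factorial : ℝ)
      = (-1:ℝ)^j * (k.choose j : ℝ) * ((a+k).factorial : ℝ) := by
  have hj0 : (j.factorial : ℝ) ≠ 0 := Nat.cast_ne_zero.mpr (Nat.factorial_ne_zero j)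
  have step : ∀ i ∈ Finset.range (j+1), lagC a j i * ((k+i+a).factorial : ℝ)
      = (((a+j).factorial : ℝ) * (k.factorial : ℝ) / (j.factorial : ℝ)) *
        ((-1:ℝ)^i * (j.choose i : ℝ) * ((((a+k)+i).choose k : ℕ) : ℝ)) := by
    intro i _
    rw [lagC_eq]
    have hidx : k+i+a = (a+i)+k := by omega
    have hidx2 : (a+i)+k = (a+k)+i := by omega
    have hfact : (((k+i+a).factorial : ℕ) : ℝ)
        = ((((a+k)+i).choose k : ℕ) : ℝ) * (((a+i).factorial : ℕ) : ℝ) * ((k.factorial : ℕ) : ℝ) := by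
      rw [hidx, ← hidx2]
      rw_mod_cast [← Nat.add_choose_mul_factorial_mul_factorial (a+i) k]
    rw [hfact]
    have hai : ((a+i).factorial : ℝ) ≠ 0 := Nat.cast_ne_zero.mpr (Nat.factorial_ne_zero _)
    field_simp
  rw [Finset.sum_congr rfl step, ← Finset.mul_sum]
  have hcast : ∑ i ∈ Finset.range (j+1), ((-1:ℝ)^i * (j.choose i : ℝ) * ((((a+k)+i).choose k : ℕ) : ℝ))
      = (((∑ i ∈ Finset.range (j+1), (-1:ℤ)^i * (j.choose i) * (((a+k)+i).choose k)) : ℤ) : ℝ) := by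
    push_cast; rfl
  rw [hcast, alt_sum_choose]
  by_cases hjk : j ≤ k
  · rw [if_pos hjk]
    have hfid := fact_id a j k hjk
    have hfidR : ((a+j).factorial : ℝ) * ((k.factorial : ℝ) * ((a+k).choose (k-j) : ℝ))
        = (j.factorial : ℝ) * ((k.choose j : ℝ) * ((a+k).factorial : ℝ)) := by
      exact_mod_cast congrArg (fun n : ℕ => (n : ℝ)) hfid
    push_cast
    field_simp
    linear_combination hfidR
  · rw [if_neg hjk]
    rw [Nat.choose_eq_zero_of_lt (by omega : k < j)]
    push_cast
    ring

noncomputable def termF (α j : ℕ) (μ : ℝ) (k : ℕ) (x : ℝ) : ℝ :=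
  (μ * x)^k / ((ascPochhammer ℝ k).eval ((α:ℝ)+1) * (k.factorial : ℝ)) *
    laguerre (α:ℝ) j x * x ^ α * Real.exp (-x)

noncomputable def coefF (α j : ℕ) (μ : ℝ) (k i : ℕ) : ℝ :=
  μ^k / ((ascPochhammer ℝ k).eval ((α:ℝ)+1) * (k.factorial : ℝ)) * lagC α j i

lemma termF_eq (α j k : ℕ) (μ x : ℝ) :
    termF α j μ k x = ∑ i ∈ Finset.range (j+1),
      coefF α j μ k i * (x^(k+i+α) * Real.exp (-x)) := by
  rw [termF, laguerre_eq, Finset.mul_sum, Finset.sum_mul, Finset.sum_mul]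
  refine Finset.sum_congr rfl fun i _ => ?_
  rw [coefF, pow_add, pow_add, mul_pow]
  ring

lemma termF_integrable (α j k : ℕ) (μ : ℝ) :
    IntegrableOn (termF α j μ k) (Set.Ioi 0) := by
  have : termF α j μ k = fun x => ∑ i ∈ Finset.range (j+1),
      coefF α j μ k i * (x^(k+i+α) * Real.exp (-x)) := funext (termF_eq α j k μ)
  rw [this]
  exact integrable_finset_sum _ fun i _ => (integrable_pow_exp (k+i+α)).const_mul _

lemma termF_integral (α j k : ℕ) (μ : ℝ) :
    ∫ x in Set.Ioi (0:ℝ), termF α j μ k x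
      = (-1:ℝ)^j * (k.choose j : ℝ) * (α.factorial : ℝ) * μ^k / (k.factorial : ℝ) := by
  simp_rw [termF_eq]
  rw [MeasureTheory.integral_finset_sum _
    (fun i _ => ((integrable_pow_exp (k+i+α)).const_mul _))]
  simp_rw [MeasureTheory.integral_const_mul, integral_pow_exp]
  have hstep : ∀ i ∈ Finset.range (j+1), coefF α j μ k i * ((k+i+α).factorial : ℝ)
      = (μ^k / ((ascPochhammer ℝ k).eval ((α:ℝ)+1) * (k.factorial : ℝ))) *
        (lagC α j i * ((k+i+α).factorial : ℝ)) := by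
    intro i _; rw [coefF]; ring
  rw [Finset.sum_congr rfl hstep, ← Finset.mul_sum, sum_lagC]
  have e := asc_eval_fact α k
  have hPk : (0:ℝ) < (ascPochhammer ℝ k).eval ((α:ℝ)+1) := asc_eval_pos α k
  have hk0 : (k.factorial : ℝ) ≠ 0 := Nat.cast_ne_zero.mpr (Nat.factorial_ne_zero k)
  rw [← e]
  field_simp

lemma choose_le_two_pow' (n i : ℕ) (h : i ≤ n) : n.choose i ≤ 2^n := by
  rw [← Nat.sum_range_choose n]
  exact Finset.single_le_sum (fun _ _ => Nat.zero_le _) (Finset.mem_range.mpr (by omega))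

lemma nat_fact_bound (a i k : ℕ) :
    (k+i+a).factorial ≤ i.factorial * 2^(a+i+k) * (a+k).factorial := by
  have h1 := Nat.add_choose_mul_factorial_mul_factorial (a+k) i
  have h2 : ((a+k)+i).choose i ≤ 2^((a+k)+i) := choose_le_two_pow' ((a+k)+i) i (by omega)
  have hidx : k+i+a = (a+k)+i := by omega
  rw [hidx, ← h1]
  calc ((a+k)+i).choose i * (a+k).factorial * i.factorial
      ≤ 2^((a+k)+i) * (a+k).factorial * i.factorial :=
        Nat.mul_le_mul_right _ (Nat.mul_le_mul_right _ h2)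
    _ = i.factorial * 2^(a+i+k) * (a+k).factorial := by ring

lemma coefF_norm (α j : ℕ) (μ : ℝ) (k i : ℕ) :
    ‖coefF α j μ k i‖ = |μ|^k / ((ascPochhammer ℝ k).eval ((α:ℝ)+1) * (k.factorial : ℝ))
      * |lagC α j i| := by
  have hPk : (0:ℝ) < (ascPochhammer ℝ k).eval ((α:ℝ)+1) := asc_eval_pos α k
  have hk : (0:ℝ) < (k.factorial : ℝ) := by exact_mod_cast Nat.factorial_pos k
  rw [coefF, Real.norm_eq_abs, abs_mul, abs_div, abs_pow, abs_mul,
    abs_of_pos hPk, abs_of_pos hk]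

lemma summable_B (α j : ℕ) (μ : ℝ) (i : ℕ) :
    Summable (fun k => ‖coefF α j μ k i‖ * (((k+i+α).factorial : ℕ) : ℝ)) := by
  set D : ℝ := |lagC α j i| * (α.factorial : ℝ) * (i.factorial : ℝ) * 2^(α+i) with hD
  have hb : ∀ k, ‖coefF α j μ k i‖ * (((k+i+α).factorial : ℕ) : ℝ)
      ≤ D * ((2*|μ|)^k / (k.factorial : ℝ)) := by
    intro k
    have hPk : (0:ℝ) < (ascPochhammer ℝ k).eval ((α:ℝ)+1) := asc_eval_pos α k
    have hk : (0:ℝ) < (k.factorial : ℝ) := by exact_mod_cast Nat.factorial_pos k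
    have key : (((k+i+α).factorial : ℕ) : ℝ)
        ≤ (i.factorial : ℝ) * 2^(α+i+k) * (((α+k).factorial : ℕ) : ℝ) := by
      exact_mod_cast nat_fact_bound α i k
    have e := asc_eval_fact α k
    have hX : ‖coefF α j μ k i‖ * (((k+i+α).factorial : ℕ) : ℝ)
        = |μ|^k * |lagC α j i| * (((k+i+α).factorial : ℕ) : ℝ)
          / ((ascPochhammer ℝ k).eval ((α:ℝ)+1) * (k.factorial : ℝ)) := by
      rw [coefF_norm]; ring
    rw [hX, div_le_iff₀ (mul_pos hPk hk)]
    calc |μ|^k * |lagC α j i| * (((k+i+α).factorial : ℕ) : ℝ)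
        ≤ (|μ|^k * |lagC α j i|) * ((i.factorial : ℝ) * 2^(α+i+k) * (((α+k).factorial : ℕ) : ℝ)) := by
          exact mul_le_mul_of_nonneg_left key (mul_nonneg (pow_nonneg (abs_nonneg μ) k) (abs_nonneg _))
      _ = D * ((2*|μ|)^k / (k.factorial : ℝ)) *
            ((ascPochhammer ℝ k).eval ((α:ℝ)+1) * (k.factorial : ℝ)) := by
          rw [hD, ← e, pow_add (2:ℝ) (α+i) k, mul_pow]
          field_simp
  exact Summable.of_nonneg_of_le (fun k => by positivity) hb
    ((Real.summable_pow_div_factorial (2*|μ|)).mul_left D)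

lemma termF_norm_summable (α j : ℕ) (μ : ℝ) :
    Summable (fun k => ∫ x in Set.Ioi (0:ℝ), ‖termF α j μ k x‖) := by
  have hle : ∀ k, (∫ x in Set.Ioi (0:ℝ), ‖termF α j μ k x‖)
      ≤ ∑ i ∈ Finset.range (j+1), ‖coefF α j μ k i‖ * (((k+i+α).factorial : ℕ) : ℝ) := by
    intro k
    have hgint : IntegrableOn
        (fun x => ∑ i ∈ Finset.range (j+1), ‖coefF α j μ k i‖ * (x^(k+i+α) * Real.exp (-x)))
        (Set.Ioi 0) :=
      integrable_finset_sum _ fun i _ => (integrable_pow_exp _).const_mul _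
    have hmono := MeasureTheory.integral_mono_of_nonneg
      (f := fun x => ‖termF α j μ k x‖)
      (g := fun x => ∑ i ∈ Finset.range (j+1), ‖coefF α j μ k i‖ * (x^(k+i+α) * Real.exp (-x)))
      (μ := MeasureTheory.volume.restrict (Set.Ioi 0))
      (Filter.Eventually.of_forall fun x => norm_nonneg _) hgint ?_
    · refine hmono.trans (le_of_eq ?_)
      rw [MeasureTheory.integral_finset_sum _
        (fun i _ => ((integrable_pow_exp (k+i+α)).const_mul _))]
      exact Finset.sum_congr rfl fun i _ => by
        rw [MeasureTheory.integral_const_mul, integral_pow_exp]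
    · filter_upwards [MeasureTheory.ae_restrict_mem measurableSet_Ioi] with x hx
      have hx' : (0:ℝ) ≤ x := le_of_lt hx
      rw [termF_eq]
      refine (norm_sum_le _ _).trans (Finset.sum_le_sum fun i _ => ?_)
      rw [norm_mul, Real.norm_eq_abs (x^(k+i+α) * Real.exp (-x)),
        abs_of_nonneg (mul_nonneg (pow_nonneg hx' _) (Real.exp_nonneg _))]
  refine Summable.of_nonneg_of_le
    (fun k => MeasureTheory.integral_nonneg fun x => norm_nonneg _) hle ?_
  exact summable_sum fun i _ => summable_B α j μ i

lemma final_tsum (α j : ℕ) (μ : ℝ) :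
    ∑' k : ℕ, (-1:ℝ)^j * ((k.choose j : ℕ) : ℝ) * (α.factorial : ℝ) * μ^k / (k.factorial : ℝ)
      = ((α.factorial : ℝ) / (j.factorial : ℝ)) * (-μ)^j * Real.exp μ := by
  set f : ℕ → ℝ :=
    fun k => (-1:ℝ)^j * ((k.choose j : ℕ) : ℝ) * (α.factorial : ℝ) * μ^k / (k.factorial : ℝ)
    with hf
  have hinj : Function.Injective (fun m : ℕ => m + j) := fun a b h => by simpa using h
  have hsupp : Function.support f ⊆ Set.range (fun m : ℕ => m + j) := by
    intro k hk
    by_contra hc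
    have hkj : k < j := by
      by_contra h'
      exact hc ⟨k - j, show (k - j) + j = k by omega⟩
    apply hk
    simp [hf, Nat.choose_eq_zero_of_lt hkj]
  rw [← hinj.tsum_eq hsupp]
  have hterm : ∀ m : ℕ, f (m + j)
      = ((-1:ℝ)^j * (α.factorial:ℝ) * μ^j / (j.factorial:ℝ)) * (μ^m / (m.factorial:ℝ)) := by
    intro m
    have hch : (((m+j).choose j : ℕ) : ℝ) * (m.factorial:ℝ) * (j.factorial:ℝ)
        = ((m+j).factorial : ℝ) := by
      exact_mod_cast Nat.add_choose_mul_factorial_mul_factorial m j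
    have hm0 : (m.factorial:ℝ) ≠ 0 := Nat.cast_ne_zero.mpr (Nat.factorial_ne_zero m)
    have hj0 : (j.factorial:ℝ) ≠ 0 := Nat.cast_ne_zero.mpr (Nat.factorial_ne_zero j)
    have hmj0 : ((m+j).factorial:ℝ) ≠ 0 := Nat.cast_ne_zero.mpr (Nat.factorial_ne_zero _)
    rw [hf]
    field_simp
    rw [pow_add]
    linear_combination (μ^m * μ^j) * hch
  rw [tsum_congr hterm, tsum_mul_left]
  have hexp : ∑' m : ℕ, μ^m / (m.factorial : ℝ) = Real.exp μ := by
    rw [Real.exp_eq_exp_ℝ, NormedSpace.exp_eq_tsum_div]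
  rw [hexp, neg_pow]
  ring

/-- `∫_0^∞ ₀F₁(α+1; μλ) L_j^{(α)}(λ) λ^α e^{-λ} dλ = (α!/j!) (-μ)^j e^μ`. -/
theorem integral_hyp0F1_laguerre (α j : ℕ) (μ : ℝ) :
    ∫ lam in Set.Ioi (0 : ℝ),
        hyp0F1 ((α : ℝ) + 1) (μ * lam) * laguerre (α : ℝ) j lam *
          lam ^ α * Real.exp (-lam) =
      ((Nat.factorial α : ℝ) / (Nat.factorial j : ℝ)) * (-μ) ^ j * Real.exp μ := by
  have h0 : ∀ x : ℝ, hyp0F1 ((α:ℝ)+1) (μ*x) * laguerre (α:ℝ) j x * x^α * Real.exp (-x)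
      = ∑' k, termF α j μ k x := by
    intro x
    rw [hyp0F1, ← tsum_mul_right, ← tsum_mul_right, ← tsum_mul_right]
    exact tsum_congr fun k => by rw [termF]
  calc ∫ lam in Set.Ioi (0 : ℝ),
        hyp0F1 ((α : ℝ) + 1) (μ * lam) * laguerre (α : ℝ) j lam *
          lam ^ α * Real.exp (-lam)
      = ∫ x in Set.Ioi (0:ℝ), ∑' k, termF α j μ k x :=
        MeasureTheory.setIntegral_congr_fun measurableSet_Ioi (fun x _ => h0 x)
    _ = ∑' k, ∫ x in Set.Ioi (0:ℝ), termF α j μ k x :=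
        (MeasureTheory.integral_tsum_of_summable_integral_norm
          (fun k => termF_integrable α j k μ) (termF_norm_summable α j μ)).symm
    _ = ∑' k : ℕ, (-1:ℝ)^j * ((k.choose j : ℕ) : ℝ) * (α.factorial : ℝ) * μ^k
          / (k.factorial : ℝ) :=
        tsum_congr fun k => termF_integral α j k μ
    _ = ((Nat.factorial α : ℝ) / (Nat.factorial j : ℝ)) * (-μ) ^ j * Real.exp μ :=
        final_tsum α j μ
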